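/- The coefficient of ζ³ in the branch of F_a fixing ζ = 0 equals ((a−7)/(3(a−1)))², the square of the coefficient of ζ². -/

import Mathlib

open Complex Filter

noncomputable def faQ (ζ : ℂ) : ℂ := 1 - 2 * ζ / 3 - ζ ^ 2 / 3
noncomputable def faS (ζ : ℂ) : ℂ := faQ ζ ^ ((1 : ℂ) / 2)
noncomputable def faW (ζ : ℂ) : ℂ := -ζ / 2 + (3 / 2) * (faS ζ - 1)
noncomputable def faW1 (ζ : ℂ) : ℂ := -1/2 - (1 + ζ) / (2 * faS ζ)
noncomputable def faW2 (ζ : ℂ) : ℂ := -1/(2 * faS ζ) - (1 + ζ)^2 / (6 * faS ζ ^ 3)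
noncomputable def faW3 (ζ : ℂ) : ℂ :=
  -(1 + ζ)/(2 * faS ζ ^ 3) - (1 + ζ)^3 / (6 * faS ζ ^ 5)
noncomputable def faF (a ζ : ℂ) : ℂ := -(faW ζ) / (1 - 2 * faW ζ / (a - 1))
noncomputable def faF1 (a ζ : ℂ) : ℂ :=
  -(a - 1)^2 * faW1 ζ / ((a - 1) - 2 * faW ζ)^2
noncomputable def faF2 (a ζ : ℂ) : ℂ :=
  -(a - 1)^2 * faW2 ζ / ((a - 1) - 2 * faW ζ)^2
    - 4 * (a - 1)^2 * faW1 ζ ^ 2 / ((a - 1) - 2 * faW ζ)^3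
noncomputable def faF3 (a ζ : ℂ) : ℂ :=
  -(a - 1)^2 * faW3 ζ / ((a - 1) - 2 * faW ζ)^2
    - 12 * (a - 1)^2 * faW1 ζ * faW2 ζ / ((a - 1) - 2 * faW ζ)^3
    - 24 * (a - 1)^2 * faW1 ζ ^ 3 / ((a - 1) - 2 * faW ζ)^4

lemma faQ_hasDerivAt (ζ : ℂ) : HasDerivAt faQ (-(2/3) - 2 * ζ / 3) ζ := by
  have h : HasDerivAt (fun z : ℂ => 1 - 2 * z / 3 - z ^ 2 / 3)
      (0 - 2 * 1 / 3 - (2 : ℕ) * ζ ^ (2 - 1) * 1 / 3) ζ :=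
    ((hasDerivAt_const ζ (1:ℂ)).sub (((hasDerivAt_id ζ).const_mul 2).div_const 3)).sub
      (((hasDerivAt_id ζ).pow 2).div_const 3)
  convert h using 1
  · rfl
  push_cast; ring

lemma faS_sq {ζ : ℂ} (h : faQ ζ ∈ slitPlane) : faS ζ * faS ζ = faQ ζ := by
  rw [faS, ← Complex.cpow_add _ _ (slitPlane_ne_zero h)]
  norm_num

lemma faS_ne {ζ : ℂ} (h : faQ ζ ∈ slitPlane) : faS ζ ≠ 0 := by
  intro h0
  have := faS_sq h
  rw [h0, mul_zero] at this
  exact slitPlane_ne_zero h this.symm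

lemma faS_hasDerivAt {ζ : ℂ} (h : faQ ζ ∈ slitPlane) :
    HasDerivAt faS (-(1 + ζ) / (3 * faS ζ)) ζ := by
  have hq := faQ_hasDerivAt ζ
  have h1 : HasDerivAt (fun z => faQ z ^ ((1:ℂ)/2))
      ((1:ℂ)/2 * faQ ζ ^ ((1:ℂ)/2 - 1) * (-(2/3) - 2 * ζ / 3)) ζ := hq.cpow_const h
  have hQ0 : faQ ζ ≠ 0 := slitPlane_ne_zero h
  have hS0 : faS ζ ≠ 0 := faS_ne h
  convert h1 using 1
  · rfl
  rw [Complex.cpow_sub _ _ hQ0, Complex.cpow_one]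
  rw [← faS, ← faS_sq h]
  field_simp
  ring

lemma faW_hasDerivAt {ζ : ℂ} (h : faQ ζ ∈ slitPlane) :
    HasDerivAt faW (faW1 ζ) ζ := by
  have hS0 : faS ζ ≠ 0 := faS_ne h
  have h1 : HasDerivAt (fun z : ℂ => -z / 2 + (3/2) * (faS z - 1))
      (-1 / 2 + (3/2) * (-(1 + ζ) / (3 * faS ζ) - 0)) ζ :=
    (((hasDerivAt_id ζ).neg.div_const 2)).add
      ((((faS_hasDerivAt h).sub (hasDerivAt_const ζ 1))).const_mul (3/2))
  convert h1 using 1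
  · rfl
  rw [faW1]
  field_simp
  ring

lemma faW1_hasDerivAt {ζ : ℂ} (h : faQ ζ ∈ slitPlane) :
    HasDerivAt faW1 (faW2 ζ) ζ := by
  have hS0 : faS ζ ≠ 0 := faS_ne h
  have hden : (2 : ℂ) * faS ζ ≠ 0 := by simp [hS0]
  have h1 : HasDerivAt (fun z : ℂ => -1/2 - (1 + z) / (2 * faS z))
      (0 - ((0 + 1) * (2 * faS ζ) - (1 + ζ) * (2 * (-(1 + ζ) / (3 * faS ζ)))) /
        (2 * faS ζ)^2) ζ :=
    (hasDerivAt_const ζ ((-1:ℂ)/2)).sub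
      (((hasDerivAt_const ζ (1:ℂ)).add (hasDerivAt_id ζ)).div
        ((faS_hasDerivAt h).const_mul 2) hden)
  convert h1 using 1
  · rfl
  rw [faW2]
  field_simp
  ring

lemma faW2_hasDerivAt {ζ : ℂ} (h : faQ ζ ∈ slitPlane) :
    HasDerivAt faW2 (faW3 ζ) ζ := by
  have hS0 : faS ζ ≠ 0 := faS_ne h
  have hS := faS_hasDerivAt h
  have hden1 : (2 : ℂ) * faS ζ ≠ 0 := by simp [hS0]
  have hden2 : (6 : ℂ) * faS ζ ^ 3 ≠ 0 := by simp [hS0]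
  have h1 : HasDerivAt (fun z : ℂ => -1/(2 * faS z) - (1 + z)^2 / (6 * faS z ^ 3))
      ((0 * (2 * faS ζ) - (-1) * (2 * (-(1 + ζ) / (3 * faS ζ)))) / (2 * faS ζ)^2
        - (((2:ℕ) * (1 + ζ) ^ (2 - 1) * (0 + 1)) * (6 * faS ζ ^ 3)
            - (1 + ζ)^2 * (6 * ((3:ℕ) * faS ζ ^ (3 - 1) * (-(1 + ζ) / (3 * faS ζ)))))
          / (6 * faS ζ ^ 3)^2) ζ :=
    (((hasDerivAt_const ζ (-1:ℂ)).div (hS.const_mul 2) hden1)).sub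
      ((((hasDerivAt_const ζ (1:ℂ)).add (hasDerivAt_id ζ)).pow 2).div
        ((hS.pow 3).const_mul 6) hden2)
  convert h1 using 1
  · rfl
  rw [faW3]
  field_simp
  ring

lemma faF_hasDerivAt {a ζ : ℂ} (ha : a ≠ 1) (h : faQ ζ ∈ slitPlane)
    (hden : (a - 1) - 2 * faW ζ ≠ 0) : HasDerivAt (faF a) (faF1 a ζ) ζ := by
  have ha' : a - 1 ≠ 0 := sub_ne_zero.mpr ha
  have hW := faW_hasDerivAt h
  have hd : (1 : ℂ) - 2 * faW ζ / (a - 1) ≠ 0 := by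
    intro h0
    apply hden
    field_simp at h0
    linear_combination h0
  have h1 : HasDerivAt (fun z : ℂ => -(faW z) / (1 - 2 * faW z / (a - 1)))
      ((-(faW1 ζ) * (1 - 2 * faW ζ / (a - 1))
        - (-(faW ζ)) * (0 - 2 * faW1 ζ / (a - 1))) / (1 - 2 * faW ζ / (a - 1))^2) ζ :=
    (hW.neg.div ((hasDerivAt_const ζ (1:ℂ)).sub ((hW.const_mul 2).div_const (a - 1))) hd)
  convert h1 using 1
  · rfl
  rw [faF1]
  field_simp
  ring

lemma faF1_hasDerivAt {a ζ : ℂ} (ha : a ≠ 1) (h : faQ ζ ∈ slitPlane)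
    (hden : (a - 1) - 2 * faW ζ ≠ 0) : HasDerivAt (faF1 a) (faF2 a ζ) ζ := by
  have hW := faW_hasDerivAt h
  have hW1 := faW1_hasDerivAt h
  have hd2 : ((a - 1) - 2 * faW ζ)^2 ≠ 0 := pow_ne_zero _ hden
  have h1 : HasDerivAt (fun z : ℂ => -(a - 1)^2 * faW1 z / ((a - 1) - 2 * faW z)^2)
      (((-(a - 1)^2 * faW2 ζ) * ((a - 1) - 2 * faW ζ)^2
        - (-(a - 1)^2 * faW1 ζ) * ((2:ℕ) * ((a - 1) - 2 * faW ζ) ^ (2 - 1)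
            * (0 - 2 * faW1 ζ)))
        / (((a - 1) - 2 * faW ζ)^2)^2) ζ :=
    ((hW1.const_mul (-(a - 1)^2)).div
      (((hasDerivAt_const ζ (a - 1)).sub (hW.const_mul 2)).pow 2) hd2)
  convert h1 using 1
  · rfl
  rw [faF2]
  field_simp
  ring

lemma faF2_hasDerivAt {a ζ : ℂ} (ha : a ≠ 1) (h : faQ ζ ∈ slitPlane)
    (hden : (a - 1) - 2 * faW ζ ≠ 0) : HasDerivAt (faF2 a) (faF3 a ζ) ζ := by
  have hW := faW_hasDerivAt h
  have hW1 := faW1_hasDerivAt h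
  have hW2 := faW2_hasDerivAt h
  have hd2 : ((a - 1) - 2 * faW ζ)^2 ≠ 0 := pow_ne_zero _ hden
  have hd3 : ((a - 1) - 2 * faW ζ)^3 ≠ 0 := pow_ne_zero _ hden
  have hden' : HasDerivAt (fun z : ℂ => (a - 1) - 2 * faW z) (0 - 2 * faW1 ζ) ζ :=
    (hasDerivAt_const ζ (a - 1)).sub (hW.const_mul 2)
  have h1 : HasDerivAt
      (fun z : ℂ => -(a - 1)^2 * faW2 z / ((a - 1) - 2 * faW z)^2
        - 4 * (a - 1)^2 * faW1 z ^ 2 / ((a - 1) - 2 * faW z)^3)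
      (((-(a - 1)^2 * faW3 ζ) * ((a - 1) - 2 * faW ζ)^2
          - (-(a - 1)^2 * faW2 ζ) * ((2:ℕ) * ((a - 1) - 2 * faW ζ) ^ (2 - 1)
              * (0 - 2 * faW1 ζ))) / (((a - 1) - 2 * faW ζ)^2)^2
        - ((4 * (a - 1)^2 * ((2:ℕ) * faW1 ζ ^ (2 - 1) * faW2 ζ))
            * ((a - 1) - 2 * faW ζ)^3
          - 4 * (a - 1)^2 * faW1 ζ ^ 2 * ((3:ℕ) * ((a - 1) - 2 * faW ζ) ^ (3 - 1)
              * (0 - 2 * faW1 ζ))) / (((a - 1) - 2 * faW ζ)^3)^2) ζ :=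
    ((hW2.const_mul (-(a - 1)^2)).div (hden'.pow 2) hd2).sub
      (((hW1.pow 2).const_mul (4 * (a - 1)^2)).div (hden'.pow 3) hd3)
  convert h1 using 1
  · rfl
  rw [faF3]
  field_simp
  ring

lemma faQ_zero : faQ 0 = 1 := by simp [faQ]

lemma faS_zero : faS 0 = 1 := by rw [faS, faQ_zero, Complex.one_cpow]

lemma faW_zero : faW 0 = 0 := by simp [faW, faS_zero]

/-- The coefficient of `ζ³` in the branch of `F_a` fixing `ζ = 0` equals
`((a−7)/(3(a−1)))²`, the square of the coefficient of `ζ²`. -/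
theorem Fa_cubic_coefficient (a : ℂ) (ha : a ≠ 1) :
    let ω : ℂ → ℂ := fun ζ =>
      -ζ / 2 + (3 / 2) * ((1 - 2 * ζ / 3 - ζ ^ 2 / 3) ^ ((1 : ℂ) / 2) - 1)
    let j : ℂ → ℂ := fun w => -w / (1 - 2 * w / (a - 1))
    iteratedDeriv 3 (fun ζ => j (ω ζ)) 0 / 6 = ((a - 7) / (3 * (a - 1))) ^ 2 := by
  intro ω j
  have ha' : a - 1 ≠ 0 := sub_ne_zero.mpr ha
  have hfun : (fun ζ => j (ω ζ)) = faF a := by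
    funext ζ; rfl
  rw [hfun]
  -- eventual hypotheses
  have hQcont : Continuous faQ := by
    unfold faQ; fun_prop
  have hQs : ∀ᶠ ζ in nhds (0 : ℂ), faQ ζ ∈ slitPlane := by
    have : faQ 0 ∈ slitPlane := by
      rw [faQ_zero]; exact Complex.one_mem_slitPlane
    exact hQcont.continuousAt.eventually_mem (isOpen_slitPlane.mem_nhds this)
  have hWcont : ContinuousAt faW 0 := by
    apply ContinuousAt.add
    · fun_prop
    · apply ContinuousAt.mul continuousAt_const
      apply ContinuousAt.sub _ continuousAt_const
      apply ContinuousAt.cpow hQcont.continuousAt continuousAt_const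
      rw [faQ_zero]; exact Complex.one_mem_slitPlane
  have hdens : ∀ᶠ ζ in nhds (0 : ℂ), (a - 1) - 2 * faW ζ ≠ 0 := by
    have hc : ContinuousAt (fun ζ => (a - 1) - 2 * faW ζ) 0 :=
      continuousAt_const.sub (continuousAt_const.mul hWcont)
    have hval : (a - 1) - 2 * faW 0 ≠ 0 := by
      rw [faW_zero]; simpa using ha'
    exact hc.eventually_ne hval
  have hP : ∀ᶠ ζ in nhds (0 : ℂ), faQ ζ ∈ slitPlane ∧ (a - 1) - 2 * faW ζ ≠ 0 :=
    hQs.and hdens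
  have hP0 : faQ 0 ∈ slitPlane ∧ (a - 1) - 2 * faW 0 ≠ 0 := by
    constructor
    · rw [faQ_zero]; exact Complex.one_mem_slitPlane
    · rw [faW_zero]; simpa using ha'
  -- derivative chain
  have e1 : deriv (faF a) =ᶠ[nhds (0 : ℂ)] faF1 a :=
    hP.mono fun ζ hζ => (faF_hasDerivAt ha hζ.1 hζ.2).deriv
  have e2 : deriv (faF1 a) =ᶠ[nhds (0 : ℂ)] faF2 a :=
    hP.mono fun ζ hζ => (faF1_hasDerivAt ha hζ.1 hζ.2).deriv
  have key : iteratedDeriv 3 (faF a) 0 = faF3 a 0 := by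
    rw [show (3 : ℕ) = 2 + 1 from rfl, iteratedDeriv_succ,
      show (2 : ℕ) = 1 + 1 from rfl, iteratedDeriv_succ, iteratedDeriv_one]
    have e2' : deriv (deriv (faF a)) =ᶠ[nhds (0 : ℂ)] faF2 a :=
      e1.deriv.trans e2
    rw [e2'.deriv_eq]
    exact (faF2_hasDerivAt ha hP0.1 hP0.2).deriv
  rw [key]
  -- evaluate
  have hS0 : faS 0 = 1 := faS_zero
  have hW0 : faW 0 = 0 := faW_zero
  have hval : faF3 a 0 = 2/3 - 8/(a-1) + 24/(a-1)^2 := by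
    rw [faF3, faW1, faW2, faW3, hS0, hW0]
    simp only [mul_zero, sub_zero, one_pow, mul_one]
    field_simp
    ring
  rw [hval]
  field_simp
  ring
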